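/- Let q be a prime power, m, r, g, δ positive integers, and set ν = r + δ − 1. Let C_out ⊆ F_{q^m}^{gr} be an F_{q^m}-linear MSRD code for the length partition (g, r) over F_q, of dimension k with 1 ≤ k ≤ gr − 1. For each i = 1, …, g, let A_i ∈ F_q^{r×ν} be a generator matrix of an F_q-linear MDS code of length ν and dimension r. Define C_glob = C_out · diag(A_1, A_2, …, A_g) ⊆ F_{q^m}^{gν}, where diag denotes the block-diagonal matrix. Then C_glob is an F_{q^m}-linear code of dimension k, and C_glob is a PMDS code with (r, δ)-localities: for the local sets Γ_i = {(i−1)ν + 1, …, iν}, the projection of C_glob onto the coordinates in Γ_i has minimum Hamming distance at least δ for every i, and for every choice of subsets Δ_i ⊆ Γ_i with |Δ_i| = r for all i, the restriction of C_glob to the coordinates in Δ = Δ_1 ∪ ⋯ ∪ Δ_g is an MDS code in F_{q^m}^{gr}. -/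

import Mathlib

/-- The sum-rank weight of a vector partitioned into blocks of length `r`, over the base
field `Fq`: the sum over blocks of the `Fq`-dimension of the span of the block entries. -/
noncomputable def wtSR (Fq : Type) {L : Type} [Field Fq] [Field L] [Algebra Fq L]
    {ι : Type} [Fintype ι] {r : ℕ} (c : ι × Fin r → L) : ℕ :=
  ∑ i : ι, Module.finrank Fq
    ↥(Submodule.span Fq (Set.range fun j : Fin r => c (i, j)))

/-- The minimum sum-rank distance of a code (a set of vectors), over the base field
`Fq`, for blocks of length `r`. -/
noncomputable def dSR (Fq : Type) {L : Type} [Field Fq] [Field L] [Algebra Fq L]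
    {ι : Type} [Fintype ι] {r : ℕ} (C : Set (ι × Fin r → L)) : ℕ :=
  sInf {w | ∃ c ∈ C, ∃ d ∈ C, c ≠ d ∧ wtSR Fq (c - d) = w}

/-- The Hamming distance between two vectors: the number of coordinates where they
differ. -/
noncomputable def hdist {F ι : Type} (c d : ι → F) : ℕ :=
  Nat.card {i // c i ≠ d i}

/-- The minimum Hamming distance of a code (a set of vectors). -/
noncomputable def minHD {F ι : Type} (S : Set (ι → F)) : ℕ :=
  sInf {w | ∃ c ∈ S, ∃ d ∈ S, c ≠ d ∧ hdist c d = w}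

/-- The block-diagonal matrix over `K` built from `r × ν` matrices over the subfield
`Fq`, one for each block index in `ι`. -/
def BlockDiag (Fq K : Type) [Field Fq] [Field K] [Algebra Fq K]
    {ι : Type} [DecidableEq ι] {r ν : ℕ}
    (A : ι → Matrix (Fin r) (Fin ν) Fq) : Matrix (ι × Fin r) (ι × Fin ν) K :=
  fun x y => if x.1 = y.1 then algebraMap Fq K (A x.1 x.2 y.2) else 0

open Matrix Submodule

section Helpers

variable {Fq K : Type} [Field Fq] [Field K] [Algebra Fq K]

lemma aux_span_le_card_nonzero [Fintype K] {n : ℕ} (y : Fin n → K) :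
    Module.finrank Fq (span Fq (Set.range y)) ≤ Nat.card {j // y j ≠ 0} := by
  classical
  have h1 : Set.range y ⊆ insert (0 : K) (y '' {j | y j ≠ 0}) := by
    rintro x ⟨j, rfl⟩
    by_cases h : y j = 0
    · simp [h]
    · exact Set.mem_insert_of_mem _ ⟨j, h, rfl⟩
  have h2 : span Fq (Set.range y) ≤ span Fq (y '' {j | y j ≠ 0}) := by
    simpa [Submodule.span_insert_zero] using Submodule.span_mono h1
  have h3 := Submodule.finrank_mono (R := Fq) h2
  refine h3.trans ?_
  refine (finrank_span_le_card (R := Fq) (y '' {j | y j ≠ 0})).trans ?_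
  rw [Set.toFinset_image, Nat.card_eq_fintype_card, Fintype.card_subtype]
  refine (Finset.card_image_le).trans (le_of_eq ?_)
  congr 1
  ext j
  simp

lemma aux_isUnit_map {n : ℕ} (M : Matrix (Fin n) (Fin n) Fq) (hM : IsUnit M) :
    IsUnit (M.map (algebraMap Fq K)) := by
  rw [Matrix.isUnit_iff_isUnit_det] at hM ⊢
  rw [← RingHom.mapMatrix_apply, ← RingHom.map_det]
  rw [isUnit_iff_ne_zero] at hM ⊢
  exact fun h => hM ((algebraMap Fq K).injective (by simpa using h))

lemma aux_vecMul_map_eq_zero {n : ℕ} (M : Matrix (Fin n) (Fin n) Fq) (hM : IsUnit M)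
    (w : Fin n → K) (h : w ᵥ* M.map (algebraMap Fq K) = 0) : w = 0 := by
  have := Matrix.vecMul_injective_iff_isUnit.2 (aux_isUnit_map (K := K) M hM)
  exact this (by simpa [Matrix.zero_vecMul] using h)

lemma aux_span_le_span_vecMul {n : ℕ} (M : Matrix (Fin n) (Fin n) Fq) (hM : IsUnit M)
    (w : Fin n → K) :
    span Fq (Set.range w) ≤ span Fq (Set.range (w ᵥ* M.map (algebraMap Fq K))) := by
  have hMK : IsUnit (M.map (algebraMap Fq K)) := aux_isUnit_map M hM
  set y := w ᵥ* M.map (algebraMap Fq K) with hy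
  have hw : w = y ᵥ* (M⁻¹.map (algebraMap Fq K)) := by
    rw [hy, Matrix.vecMul_vecMul, ← Matrix.map_mul,
      Matrix.mul_nonsing_inv _ ((Matrix.isUnit_iff_isUnit_det _).1 hM),
      Matrix.map_one _ (map_zero _) (map_one _), Matrix.vecMul_one]
  rw [Submodule.span_le]
  rintro x ⟨t, rfl⟩
  rw [hw]
  show (y ᵥ* (M⁻¹.map (algebraMap Fq K))) t ∈ _
  rw [Matrix.vecMul, dotProduct]
  refine Submodule.sum_mem _ fun j _ => ?_
  rw [Matrix.map_apply, mul_comm, ← Algebra.smul_def]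
  exact Submodule.smul_mem _ _ (Submodule.subset_span ⟨j, rfl⟩)

lemma aux_hdist_sum {g n : ℕ} {F : Type} (c d : Fin g × Fin n → F) :
    hdist c d = ∑ i : Fin g, Nat.card {j : Fin n // c (i, j) ≠ d (i, j)} := by
  classical
  have e : {p : Fin g × Fin n // c p ≠ d p} ≃ Σ i : Fin g, {j : Fin n // c (i, j) ≠ d (i, j)} :=
    { toFun := fun p => ⟨p.1.1, p.1.2, by exact_mod_cast p.2⟩
      invFun := fun s => ⟨(s.1, s.2.1), s.2.2⟩
      left_inv := fun p => rfl
      right_inv := fun s => rfl }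
  rw [hdist, Nat.card_congr e, Nat.card_eq_fintype_card, Fintype.card_sigma]
  simp [Nat.card_eq_fintype_card]

lemma aux_vecMul_blockDiag {g r ν : ℕ} (A : Fin g → Matrix (Fin r) (Fin ν) Fq)
    (x : Fin g × Fin r → K) (i : Fin g) (j : Fin ν) :
    (x ᵥ* BlockDiag Fq K A) (i, j)
      = ((fun t => x (i, t)) ᵥ* (A i).map (algebraMap Fq K)) j := by
  classical
  rw [Matrix.vecMul, Matrix.vecMul, dotProduct, dotProduct, Fintype.sum_prod_type]
  rw [Finset.sum_eq_single i]
  · simp [BlockDiag]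
  · intro b _ hb
    apply Finset.sum_eq_zero
    intro t _
    simp [BlockDiag, hb]
  · simp

lemma aux_vecMul_cols {r ν : ℕ} (B : Matrix (Fin r) (Fin ν) Fq) (w : Fin r → K)
    (f : Fin r → Fin ν) (t : Fin r) :
    (w ᵥ* (Matrix.of fun s t => B s (f t)).map (algebraMap Fq K)) t
      = (w ᵥ* B.map (algebraMap Fq K)) (f t) := by
  simp [Matrix.vecMul, dotProduct]

lemma aux_minHD_le {F ι : Type} {S : Set (ι → F)} {c d : ι → F}
    (hc : c ∈ S) (hd : d ∈ S) (hcd : c ≠ d) : minHD S ≤ hdist c d :=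
  Nat.sInf_le ⟨c, hc, d, hd, hcd, rfl⟩

lemma aux_hdist_le {F ι : Type} [Fintype ι] (c d : ι → F) :
    hdist c d ≤ Fintype.card ι := by
  classical
  rw [hdist, Nat.card_eq_fintype_card]
  exact Fintype.card_subtype_le _

lemma aux_minHD_eq [Fintype Fq] {q r ν δ : ℕ}
    (hq : 2 ≤ q) (hcq : Fintype.card Fq = q) (hδ : 0 < δ) (hν : ν = r + δ - 1) (hr : 0 < r)
    (S : Submodule Fq (Fin ν → Fq)) (hdim : Module.finrank Fq ↥S = r)
    (hcard : Nat.card ↥S = q ^ (ν - minHD (S : Set (Fin ν → Fq)) + 1)) :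
    minHD (S : Set (Fin ν → Fq)) = δ := by
  classical
  set d := minHD (S : Set (Fin ν → Fq)) with hd
  have hcard2 : Nat.card ↥S = q ^ r := by
    rw [Nat.card_eq_fintype_card, Module.card_eq_pow_finrank (K := Fq) (V := ↥S), hcq, hdim]
  have h2S : 1 < Nat.card ↥S := by
    rw [hcard2]
    calc 1 < 2 ^ 1 := by norm_num
    _ ≤ q ^ r := Nat.pow_le_pow_left hq r |>.trans' (Nat.pow_le_pow_right (by omega) hr)
  have hdν : d ≤ ν := by
    rw [Nat.card_eq_fintype_card, Fintype.one_lt_card_iff] at h2S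
    obtain ⟨a, b, hab⟩ := h2S
    have : (a : Fin ν → Fq) ≠ b := fun h => hab (Subtype.ext h)
    exact (aux_minHD_le a.2 b.2 this).trans ((aux_hdist_le _ _).trans (by simp))
  have hexp : r = ν - d + 1 := by
    have := hcard2.symm.trans hcard
    exact Nat.pow_right_injective hq this
  omega

lemma aux_cols_isUnit [Fintype Fq] {r ν δ : ℕ} (hδ : 0 < δ)
    (hν : ν = r + δ - 1)
    (B : Matrix (Fin r) (Fin ν) Fq)
    (hBinj : ∀ x : Fin r → Fq, x ᵥ* B = 0 → x = 0)
    (hwt : ∀ x : Fin r → Fq, x ≠ 0 → δ ≤ Nat.card {j // (x ᵥ* B) j ≠ 0})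
    (f : Fin r → Fin ν) (hf : Function.Injective f) :
    IsUnit (Matrix.of fun s t => B s (f t)) := by
  classical
  rw [← Matrix.vecMul_injective_iff_isUnit]
  intro x y hxy
  rw [← sub_eq_zero]
  by_contra hz
  set z := x - y with hzdef
  have hzM : z ᵥ* (Matrix.of fun s t => B s (f t)) = 0 := by
    simp only at hxy
    rw [hzdef, Matrix.sub_vecMul, hxy, sub_self]
  set w := z ᵥ* B with hw
  have hwne : w ≠ 0 := fun h => hz (hBinj z h)
  have hwf : ∀ t, w (f t) = 0 := by
    intro t
    have := congr_fun hzM t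
    simpa [Matrix.vecMul, dotProduct, hw] using this
  have hle : Nat.card {j // w j ≠ 0} ≤ ν - r := by
    rw [Nat.card_eq_fintype_card]
    have h1 : Fintype.card {j // w j ≠ 0} = ν - Fintype.card {j // w j = 0} := by
      have := Fintype.card_subtype_compl (fun j : Fin ν => w j = 0)
      simp only [Fintype.card_fin] at this
      convert this using 2
    have h2 : r ≤ Fintype.card {j // w j = 0} := by
      have : Function.Injective (fun t : Fin r => (⟨f t, hwf t⟩ : {j // w j = 0})) := by
        intro a b hab
        exact hf (congr_arg Subtype.val hab)
      simpa using Fintype.card_le_of_injective _ this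
    omega
  have := hwt z hz
  rw [← hw] at this
  omega

end Helpers

/-- (Construction 1.) Multiplying an MSRD outer code by a block diagonal
matrix of generator matrices of `F_q`-linear MDS local codes yields a PMDS code with
`(r,δ)`-localities: the dimension is preserved, every local projection has minimum
Hamming distance at least `δ`, and every restriction to `r` coordinates per local set
is MDS. -/
theorem construction1_is_PMDS
    (q m r g δ k : ℕ) (hq : IsPrimePow q) (hm : 0 < m) (hr : 0 < r)
    (hg : 0 < g) (hδ : 0 < δ)
    (ν : ℕ) (hν : ν = r + δ - 1)
    (Fq K : Type) [Field Fq] [Field K] [Fintype Fq] [Fintype K] [Algebra Fq K]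
    (hcq : Fintype.card Fq = q) (hcK : Fintype.card K = q ^ m)
    (Cout : Submodule K (Fin g × Fin r → K))
    (hk : Module.finrank K ↥Cout = k) (hk1 : 1 ≤ k) (hk2 : k ≤ g * r - 1)
    (hMSRD : Nat.card ↥Cout = (q ^ m) ^
      (g * r - dSR Fq ((Cout : Submodule K (Fin g × Fin r → K)) :
        Set (Fin g × Fin r → K)) + 1))
    (A : Fin g → Matrix (Fin r) (Fin ν) Fq)
    (hAdim : ∀ i, Module.finrank Fq
      ↥(LinearMap.range (Matrix.vecMulLinear (A i))) = r)
    (hAMDS : ∀ i, Nat.card ↥(LinearMap.range (Matrix.vecMulLinear (A i)))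
      = q ^ (ν - minHD ((LinearMap.range (Matrix.vecMulLinear (A i)) :
          Submodule Fq (Fin ν → Fq)) : Set (Fin ν → Fq)) + 1))
    (Cglob : Submodule K (Fin g × Fin ν → K))
    (hCglob : Cglob = Submodule.map
      (Matrix.vecMulLinear (BlockDiag Fq K A)) Cout) :
    Module.finrank K ↥Cglob = k ∧
    (∀ i : Fin g, ∀ c ∈ Cglob, ∀ d ∈ Cglob,
      (fun j : Fin ν => c (i, j)) ≠ (fun j : Fin ν => d (i, j)) →
      δ ≤ hdist (fun j : Fin ν => c (i, j)) (fun j : Fin ν => d (i, j))) ∧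
    (∀ Δ : (i : Fin g) → Fin r → Fin ν, (∀ i, Function.Injective (Δ i)) →
      Nat.card ↥(Submodule.map
          (LinearMap.funLeft K K (fun p : Fin g × Fin r => (p.1, Δ p.1 p.2))) Cglob)
        = (q ^ m) ^ (g * r - minHD ((Submodule.map
            (LinearMap.funLeft K K (fun p : Fin g × Fin r => (p.1, Δ p.1 p.2))) Cglob :
            Submodule K (Fin g × Fin r → K)) : Set (Fin g × Fin r → K)) + 1)) := by
  classical
  have hq2 : 2 ≤ q := hq.two_le
  have hqm2 : 2 ≤ q ^ m :=
    le_trans (by norm_num : (2:ℕ) ≤ 2 ^ 1)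
      ((Nat.pow_le_pow_right (by omega) hm).trans' (le_of_eq rfl) |>.trans
        (Nat.pow_le_pow_left hq2 m))
  have hrν : r ≤ ν := by omega
  -- the local codes have trivial left kernels
  have hBinj : ∀ i (x : Fin r → Fq), x ᵥ* A i = 0 → x = 0 := by
    intro i x hx
    have hrk := hAdim i
    have hker := LinearMap.finrank_range_add_finrank_ker (Matrix.vecMulLinear (A i))
    rw [hrk] at hker
    simp only [Module.finrank_pi, Fintype.card_fin] at hker
    have : Module.finrank Fq ↥(LinearMap.ker (Matrix.vecMulLinear (A i))) = 0 := by omega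
    have hbot := Submodule.finrank_eq_zero.1 this
    have : x ∈ LinearMap.ker (Matrix.vecMulLinear (A i)) := by
      rw [LinearMap.mem_ker, Matrix.vecMulLinear_apply]
      exact hx
    rw [hbot] at this
    simpa using this
  -- the local codes have minimum distance δ
  have hdloc : ∀ i, minHD ((LinearMap.range (Matrix.vecMulLinear (A i)) :
      Submodule Fq (Fin ν → Fq)) : Set (Fin ν → Fq)) = δ := fun i =>
    aux_minHD_eq hq2 hcq hδ hν hr _ (hAdim i) (hAMDS i)
  -- nonzero local codewords have weight ≥ δ
  have hwt : ∀ i (x : Fin r → Fq), x ≠ 0 → δ ≤ Nat.card {j // (x ᵥ* A i) j ≠ 0} := by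
    intro i x hx
    have hmem : (x ᵥ* A i) ∈ LinearMap.range (Matrix.vecMulLinear (A i)) :=
      ⟨x, Matrix.vecMulLinear_apply _ _⟩
    have hne : (x ᵥ* A i) ≠ (0 : Fin ν → Fq) := fun h => hx (hBinj i x h)
    have := aux_minHD_le (S := ((LinearMap.range (Matrix.vecMulLinear (A i)) :
        Submodule Fq (Fin ν → Fq)) : Set (Fin ν → Fq))) hmem (Submodule.zero_mem _) hne
    rw [hdloc i] at this
    refine this.trans (le_of_eq ?_)
    rw [hdist]
    congr 1
  -- every r columns of each A i form an invertible matrix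
  have hcols : ∀ i (f : Fin r → Fin ν), Function.Injective f →
      IsUnit (Matrix.of fun s t => A i s (f t)) := fun i f hf =>
    aux_cols_isUnit hδ hν (A i) (hBinj i) (hwt i) f hf
  -- injectivity of the global encoder
  have hφinj : Function.Injective (Matrix.vecMulLinear (BlockDiag Fq K A)) := by
    rw [← LinearMap.ker_eq_bot, LinearMap.ker_eq_bot']
    intro x hx
    rw [Matrix.vecMulLinear_apply] at hx
    funext p
    obtain ⟨i, t⟩ := p
    set M : Matrix (Fin r) (Fin r) Fq := Matrix.of fun s t => A i s (Fin.castLE hrν t) with hM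
    have hMunit : IsUnit M := hcols i _ (Fin.castLE_injective hrν)
    have hblk : (fun t => x (i, t)) ᵥ* M.map (algebraMap Fq K) = 0 := by
      funext t'
      rw [hM, aux_vecMul_cols, ← aux_vecMul_blockDiag, hx]
      rfl
    have := aux_vecMul_map_eq_zero M hMunit _ hblk
    exact congr_fun this t
  refine ⟨?_, ?_, ?_⟩
  · -- dimension
    rw [hCglob, ← hk]
    exact (LinearEquiv.finrank_eq (Submodule.equivMapOfInjective _ hφinj Cout)).symm
  · -- local distance
    intro i c hc d hd hne
    rw [hCglob] at hc hd
    obtain ⟨u, hu, rfl⟩ := hc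
    obtain ⟨v, hv, rfl⟩ := hd
    set w : Fin r → K := fun t => u (i, t) - v (i, t) with hwdef
    set y : Fin ν → K := w ᵥ* (A i).map (algebraMap Fq K) with hy
    have hval : ∀ j, (Matrix.vecMulLinear (BlockDiag Fq K A) u) (i, j)
        - (Matrix.vecMulLinear (BlockDiag Fq K A) v) (i, j) = y j := by
      intro j
      rw [Matrix.vecMulLinear_apply, Matrix.vecMulLinear_apply,
        aux_vecMul_blockDiag, aux_vecMul_blockDiag, hy]
      rw [hwdef]
      simp [Matrix.vecMul, dotProduct, sub_mul, Finset.sum_sub_distrib]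
    by_contra hlt
    push_neg at hlt
    have hcards : hdist (fun j : Fin ν => (Matrix.vecMulLinear (BlockDiag Fq K A) u) (i, j))
        (fun j : Fin ν => (Matrix.vecMulLinear (BlockDiag Fq K A) v) (i, j))
        = Nat.card {j // y j ≠ 0} := by
      rw [hdist]
      apply Nat.card_congr
      apply Equiv.subtypeEquivRight
      intro j
      rw [← hval j]
      constructor
      · exact fun h => sub_ne_zero_of_ne h
      · exact fun h => sub_ne_zero.1 h
    rw [hcards] at hlt
    -- y has ≥ r zeros; pick r of them, get contradiction with invertibility
    have hzeros : r ≤ Fintype.card {j // y j = 0} := by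
      have h1 : Fintype.card {j // y j ≠ 0} = ν - Fintype.card {j // y j = 0} := by
        have := Fintype.card_subtype_compl (fun j : Fin ν => y j = 0)
        simp only [Fintype.card_fin] at this
        convert this using 2
      have h2 : Fintype.card {j // y j = 0} ≤ ν := by simpa using Fintype.card_subtype_le (fun j => y j = 0)
      rw [Nat.card_eq_fintype_card] at hlt
      omega
    obtain ⟨e⟩ := Function.Embedding.nonempty_of_card_le
      (show Fintype.card (Fin r) ≤ Fintype.card {j // y j = 0} by simpa using hzeros)
    set f : Fin r → Fin ν := fun t => (e t : Fin ν) with hf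
    have hfinj : Function.Injective f := fun a b hab =>
      e.injective (Subtype.ext hab)
    have hMunit := hcols i f hfinj
    have hwM : w ᵥ* (Matrix.of fun s t => A i s (f t)).map (algebraMap Fq K) = 0 := by
      funext t
      rw [aux_vecMul_cols, ← hy]
      exact (e t).2
    have hw0 : w = 0 := aux_vecMul_map_eq_zero _ hMunit _ hwM
    apply hne
    funext j
    have := hval j
    rw [hy, hw0] at this
    simp only [Matrix.zero_vecMul] at this
    exact sub_eq_zero.1 (by simpa using this)
  · -- PMDS property
    intro Δ hΔ
    set P := LinearMap.funLeft K K (fun p : Fin g × Fin r => (p.1, Δ p.1 p.2)) with hP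
    set φ := Matrix.vecMulLinear (BlockDiag Fq K A) with hφ
    set ψ := P ∘ₗ φ with hψ
    have hψval : ∀ (u : Fin g × Fin r → K) (i : Fin g) (j : Fin r),
        ψ u (i, j) = ((fun t => u (i, t)) ᵥ*
          (Matrix.of fun s t => A i s (Δ i t)).map (algebraMap Fq K)) j := by
      intro u i j
      rw [hψ]
      simp only [LinearMap.comp_apply, hP, LinearMap.funLeft_apply, hφ,
        Matrix.vecMulLinear_apply]
      rw [aux_vecMul_cols, ← aux_vecMul_blockDiag]
    have hψinj : Function.Injective ψ := by
      rw [← LinearMap.ker_eq_bot, LinearMap.ker_eq_bot']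
      intro x hx
      funext p
      obtain ⟨i, t⟩ := p
      have hMunit := hcols i (Δ i) (hΔ i)
      have hblk : (fun t => x (i, t)) ᵥ*
          (Matrix.of fun s t => A i s (Δ i t)).map (algebraMap Fq K) = 0 := by
        funext t'
        rw [← hψval x i t', hx]
        rfl
      exact congr_fun (aux_vecMul_map_eq_zero _ hMunit _ hblk) t
    set D := Submodule.map P Cglob with hD
    have hDmap : D = Submodule.map ψ Cout := by
      rw [hD, hCglob, hψ, hφ, Submodule.map_comp]
    have hcardD : Nat.card ↥D = Nat.card ↥Cout := by
      rw [hDmap]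
      exact (Nat.card_congr (Submodule.equivMapOfInjective ψ hψinj Cout).toEquiv).symm
    set s := dSR Fq ((Cout : Submodule K (Fin g × Fin r → K)) :
      Set (Fin g × Fin r → K)) with hs
    -- a nonzero element of Cout
    have hCout2 : ∃ u ∈ Cout, u ≠ (0 : Fin g × Fin r → K) := by
      by_contra h
      push_neg at h
      have hbot : Cout = ⊥ := by
        rw [Submodule.eq_bot_iff]
        exact h
      rw [hbot] at hk
      simp only [finrank_bot] at hk
      omega
    obtain ⟨u0, hu0, hu0ne⟩ := hCout2
    -- bound on sum-rank weights
    have hwtSR_le : ∀ w : Fin g × Fin r → K, wtSR Fq w ≤ g * r := by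
      intro w
      rw [wtSR]
      calc ∑ i : Fin g, Module.finrank Fq
            ↥(Submodule.span Fq (Set.range fun j : Fin r => w (i, j)))
          ≤ ∑ _i : Fin g, r := by
            refine Finset.sum_le_sum fun i _ => ?_
            refine (finrank_span_le_card (R := Fq)
              (Set.range fun j : Fin r => w (i, j))).trans ?_
            rw [Set.toFinset_card]
            exact (Fintype.card_range_le _).trans (by simp)
        _ = g * r := by simp [Finset.sum_const, Finset.card_univ]
    have hs_le : s ≤ g * r := by
      have hsetne : {w | ∃ c ∈ ((Cout : Submodule K (Fin g × Fin r → K)) :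
          Set (Fin g × Fin r → K)), ∃ d ∈ ((Cout : Submodule K (Fin g × Fin r → K)) :
          Set (Fin g × Fin r → K)), c ≠ d ∧ wtSR Fq (c - d) = w}.Nonempty :=
        ⟨_, u0, hu0, 0, Submodule.zero_mem _, hu0ne, rfl⟩
      obtain ⟨c, hc, d, hd, hcd, hw⟩ := Nat.sInf_mem hsetne
      have : s = wtSR Fq (c - d) := by
        rw [hs]
        simp only [dSR]
        exact hw.symm
      rw [this]
      exact hwtSR_le _
    -- (a) : s is a lower bound for distances in D
    have ha : ∀ c ∈ D, ∀ d ∈ D, c ≠ d → s ≤ hdist c d := by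
      intro c hc d hd hcd
      rw [hDmap] at hc hd
      obtain ⟨u, hu, rfl⟩ := hc
      obtain ⟨v, hv, rfl⟩ := hd
      have huv : u ≠ v := fun h => hcd (by rw [h])
      have h1 : s ≤ wtSR Fq (u - v) := by
        rw [hs]
        simp only [dSR]
        exact Nat.sInf_le ⟨u, hu, v, hv, huv, rfl⟩
      refine h1.trans ?_
      rw [wtSR, aux_hdist_sum]
      refine Finset.sum_le_sum fun i _ => ?_
      have hMunit := hcols i (Δ i) (hΔ i)
      set w : Fin r → K := fun t => (u - v) (i, t) with hwdef
      set y : Fin r → K := w ᵥ*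
        (Matrix.of fun s t => A i s (Δ i t)).map (algebraMap Fq K) with hydef
      have hy : ∀ j, y j = ψ u (i, j) - ψ v (i, j) := by
        intro j
        rw [hψval, hψval, hydef, hwdef]
        simp [Matrix.vecMul, dotProduct, sub_mul, Finset.sum_sub_distrib]
      have c1 := Submodule.finrank_mono (R := Fq)
        (aux_span_le_span_vecMul (K := K) _ hMunit w)
      have c2 := aux_span_le_card_nonzero (Fq := Fq) y
      have c3 : Nat.card {j // y j ≠ 0}
          = Nat.card {j : Fin r // ψ u (i, j) ≠ ψ v (i, j)} := by
        apply Nat.card_congr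
        apply Equiv.subtypeEquivRight
        intro j
        rw [hy j]
        exact sub_ne_zero
      calc Module.finrank Fq ↥(Submodule.span Fq (Set.range fun j : Fin r => (u - v) (i, j)))
          = Module.finrank Fq ↥(Submodule.span Fq (Set.range w)) := rfl
        _ ≤ Module.finrank Fq ↥(Submodule.span Fq (Set.range y)) := c1
        _ ≤ Nat.card {j // y j ≠ 0} := c2
        _ = _ := c3
    -- distinct elements of D
    have hmem0 : (0 : Fin g × Fin r → K) ∈ D := Submodule.zero_mem D
    have hmemu0 : ψ u0 ∈ D := by
      rw [hDmap]
      exact ⟨u0, hu0, rfl⟩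
    have hψu0ne : ψ u0 ≠ 0 := by
      intro h
      exact hu0ne (hψinj (by rw [h, map_zero]))
    set dd := minHD ((D : Submodule K (Fin g × Fin r → K)) : Set (Fin g × Fin r → K)) with hdd
    have hddsetne : {w | ∃ c ∈ ((D : Submodule K (Fin g × Fin r → K)) :
        Set (Fin g × Fin r → K)), ∃ d ∈ ((D : Submodule K (Fin g × Fin r → K)) :
        Set (Fin g × Fin r → K)), c ≠ d ∧ hdist c d = w}.Nonempty :=
      ⟨_, ψ u0, hmemu0, 0, hmem0, hψu0ne, rfl⟩
    obtain ⟨c, hc, d, hd, hcd, hdcd⟩ := Nat.sInf_mem hddsetne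
    have hdcd' : hdist c d = dd := hdcd
    have hsdd : s ≤ dd := hdcd' ▸ ha c hc d hd hcd
    have hdd1 : 1 ≤ dd := by
      rw [← hdcd']
      rw [hdist]
      have : ∃ p, c p ≠ d p := Function.ne_iff.1 hcd
      obtain ⟨p, hp⟩ := this
      have : Nonempty {p // c p ≠ d p} := ⟨⟨p, hp⟩⟩
      exact Nat.one_le_iff_ne_zero.2 (Nat.card_ne_zero.2 ⟨this, inferInstance⟩)
    have hddn : dd ≤ g * r := by
      rw [← hdcd']
      exact (aux_hdist_le c d).trans (by simp)
    -- Singleton bound: dd ≤ s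
    obtain ⟨T, hTsub, hTcard⟩ := Finset.exists_subset_card_eq
      (s := (Finset.univ : Finset (Fin g × Fin r))) (n := g * r - dd + 1)
      (by simp only [Finset.card_univ, Fintype.card_prod, Fintype.card_fin]; omega)
    have hinj2 : Function.Injective
        (fun (x : ↥D) (t : ↥T) => (x : Fin g × Fin r → K) t.1) := by
      intro x y hxy
      by_contra hne2
      have hxyne : (x : Fin g × Fin r → K) ≠ (y : Fin g × Fin r → K) :=
        fun h => hne2 (Subtype.ext h)
      have h1 : dd ≤ hdist (x : Fin g × Fin r → K) (y : Fin g × Fin r → K) :=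
        aux_minHD_le x.2 y.2 hxyne
      have h2 : hdist (x : Fin g × Fin r → K) (y : Fin g × Fin r → K)
          ≤ g * r - T.card := by
        rw [hdist, Nat.card_eq_fintype_card, Fintype.card_subtype]
        have hsub : Finset.filter
            (fun p => (x : Fin g × Fin r → K) p ≠ (y : Fin g × Fin r → K) p)
            Finset.univ ⊆ Finset.univ \ T := by
          intro p hp
          simp only [Finset.mem_filter] at hp
          rw [Finset.mem_sdiff]
          refine ⟨Finset.mem_univ _, fun hpT => hp.2 ?_⟩
          exact congr_fun hxy ⟨p, hpT⟩
        refine (Finset.card_le_card hsub).trans ?_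
        rw [Finset.card_sdiff_of_subset (Finset.subset_univ T)]
        simp
      rw [hTcard] at h2
      omega
    have hcard_le : Nat.card ↥D ≤ Nat.card (↥T → K) :=
      Nat.card_le_card_of_injective _ hinj2
    have hcardT : Nat.card (↥T → K) = (q ^ m) ^ (g * r - dd + 1) := by
      rw [Nat.card_fun, Nat.card_eq_fintype_card, Nat.card_eq_fintype_card, hcK,
        Fintype.card_coe, hTcard]
    have hdds : dd ≤ s := by
      rw [hcardT, hcardD, hMSRD] at hcard_le
      have := (Nat.pow_le_pow_iff_right (by omega : 1 < q ^ m)).1 hcard_le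
      omega
    have hfinal : dd = s := le_antisymm hdds hsdd
    rw [hcardD, hMSRD, hfinal]
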